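/- arXiv:2004.03083 — 6 statements merged into one kernel-verified Lean document; each statement's English description precedes it below -/
import Mathlib

section
/- Let ε^{(1)}, …, ε^{(L)} be i.i.d. standard Gaussian random variables, and let φ, φ' : ℝ → ℝ be measurable with 0 ≤ φ(ε) ≤ B, b' ≤ φ'(ε) ≤ B' for all ε, E[φ(ε)] ≥ ζ > 0, and E[φ'(ε)] = 0. Fix α ∈ (0, 1/2] and δ ∈ (0,1). If L > max{ (B'−b')², B²/ζ² } · log(4/δ)/(2α²), then with probability at least 1 − δ the sample ratio satisfies |(∑_{ℓ=1}^L φ'(ε^{(ℓ)})) / (∑_{ℓ=1}^L φ(ε^{(ℓ)}))| ≤ α/(ζ(1−α)) ≤ 2α/ζ. -/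
open MeasureTheory ProbabilityTheory Finset

section Aux

lemma hoeffding_d_pos (p : ℝ) (hp0 : 0 ≤ p) (hp1 : p ≤ 1) (h : ℝ) :
    0 < 1 - p + p * Real.exp h := by
  have h1 : 0 ≤ p * Real.exp h := mul_nonneg hp0 (Real.exp_pos h).le
  rcases lt_or_eq_of_le hp1 with hlt | heq
  · linarith
  · subst heq; simpa using Real.exp_pos h

lemma hoeffding_key (p : ℝ) (hp0 : 0 ≤ p) (hp1 : p ≤ 1) (h : ℝ) :
    -(p * h) + Real.log (1 - p + p * Real.exp h) ≤ h ^ 2 / 8 := by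
  set d : ℝ → ℝ := fun x => 1 - p + p * Real.exp x with hd
  have hdpos : ∀ x, 0 < d x := fun x => hoeffding_d_pos p hp0 hp1 x
  have hd0 : d 0 = 1 := by simp [hd]
  have hdd : ∀ x, HasDerivAt d (p * Real.exp x) x := by
    intro x
    exact ((Real.hasDerivAt_exp x).const_mul p).const_add (1 - p)
  set ψ : ℝ → ℝ := fun x => x / 4 + p - p * Real.exp x / d x with hψ
  have hψd : ∀ x, HasDerivAt ψ
      (1 / 4 - p * (1 - p) * Real.exp x / (d x) ^ 2) x := by
    intro x
    have h1 : HasDerivAt (fun x => p * Real.exp x) (p * Real.exp x) x :=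
      (Real.hasDerivAt_exp x).const_mul p
    have h2 : HasDerivAt (fun x => p * Real.exp x / d x)
        ((p * Real.exp x * d x - p * Real.exp x * (p * Real.exp x)) / (d x) ^ 2) x :=
      h1.div (hdd x) (hdpos x).ne'
    have h3 : HasDerivAt (fun x : ℝ => x / 4 + p) (1 / 4) x := by
      simpa using (hasDerivAt_id x).div_const 4 |>.add_const p
    have := h3.sub h2
    refine this.congr_deriv ?_
    have hdx : d x = 1 - p + p * Real.exp x := rfl
    rw [hdx]
    ring
  have hψ0 : ψ 0 = 0 := by simp [hψ, hd0]
  have hψmono : Monotone ψ := by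
    refine monotone_of_deriv_nonneg (fun x => (hψd x).differentiableAt) ?_
    intro x
    rw [(hψd x).deriv]
    have hd2 : (0:ℝ) < (d x) ^ 2 := pow_pos (hdpos x) 2
    rw [sub_nonneg, div_le_iff₀ hd2]
    have hdx : d x = 1 - p + p * Real.exp x := rfl
    rw [hdx]
    nlinarith [sq_nonneg ((1 - p) - p * Real.exp x), Real.exp_pos x]
  set g : ℝ → ℝ := fun x => x ^ 2 / 8 + p * x - Real.log (d x) with hg
  have hgd : ∀ x, HasDerivAt g (ψ x) x := by
    intro x
    have h1 : HasDerivAt (fun x : ℝ => x ^ 2 / 8 + p * x) (x / 4 + p) x := by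
      have := ((hasDerivAt_pow 2 x).div_const 8).add ((hasDerivAt_id x).const_mul p)
      refine this.congr_deriv ?_
      simp; ring
    have h2 : HasDerivAt (fun x => Real.log (d x)) (p * Real.exp x / d x) x :=
      (hdd x).log (hdpos x).ne'
    exact h1.sub h2
  have hg0 : g 0 = 0 := by simp [hg, hd0]
  have key : ∀ x, 0 ≤ g x := by
    intro x
    rcases le_or_gt 0 x with hx | hx
    · have hmono : MonotoneOn g (Set.Ici (0:ℝ)) := by
        refine monotoneOn_of_deriv_nonneg (convex_Ici 0)
          (fun y _ => ((hgd y).differentiableAt).continuousAt.continuousWithinAt)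
          (fun y _ => ((hgd y).differentiableAt).differentiableWithinAt) ?_
        intro y hy
        rw [interior_Ici] at hy
        rw [(hgd y).deriv]
        have := hψmono (le_of_lt hy)
        rwa [hψ0] at this
      have := hmono Set.self_mem_Ici (Set.mem_Ici.mpr hx) hx
      rwa [hg0] at this
    · have hanti : AntitoneOn g (Set.Iic (0:ℝ)) := by
        refine antitoneOn_of_deriv_nonpos (convex_Iic 0)
          (fun y _ => ((hgd y).differentiableAt).continuousAt.continuousWithinAt)
          (fun y _ => ((hgd y).differentiableAt).differentiableWithinAt) ?_
        intro y hy
        rw [interior_Iic] at hy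
        rw [(hgd y).deriv]
        have := hψmono (le_of_lt hy)
        rwa [hψ0] at this
      have := hanti (Set.mem_Iic.mpr hx.le) Set.self_mem_Iic hx.le
      rwa [hg0] at this
  have := key h
  simp only [hg] at this
  linarith

lemma integrable_of_bddIcc {Ω : Type*} [MeasurableSpace Ω] {μ : Measure Ω}
    [IsProbabilityMeasure μ] {X : Ω → ℝ} (hX : Measurable X) (a b : ℝ)
    (hbdd : ∀ ω, a ≤ X ω ∧ X ω ≤ b) : Integrable X μ := by
  refine Integrable.mono' (integrable_const (max |a| |b|)) hX.aestronglyMeasurable ?_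
  exact ae_of_all _ fun ω => by
    rw [Real.norm_eq_abs]
    exact abs_le_max_abs_abs (hbdd ω).1 (hbdd ω).2

lemma integrable_exp_of_bddIcc {Ω : Type*} [MeasurableSpace Ω] {μ : Measure Ω}
    [IsProbabilityMeasure μ] {X : Ω → ℝ} (hX : Measurable X) (a b t : ℝ)
    (hbdd : ∀ ω, a ≤ X ω ∧ X ω ≤ b) :
    Integrable (fun ω => Real.exp (t * X ω)) μ := by
  refine Integrable.mono' (integrable_const (Real.exp (|t| * max |a| |b|)))
    ((hX.const_mul t).exp.aestronglyMeasurable) ?_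
  refine ae_of_all _ fun ω => ?_
  rw [Real.norm_eq_abs, abs_of_pos (Real.exp_pos _), Real.exp_le_exp]
  calc t * X ω ≤ |t * X ω| := le_abs_self _
    _ = |t| * |X ω| := abs_mul t (X ω)
    _ ≤ |t| * max |a| |b| := by
        have := abs_le_max_abs_abs (hbdd ω).1 (hbdd ω).2
        exact mul_le_mul_of_nonneg_left this (abs_nonneg t)

/-- **Hoeffding's lemma**. -/
lemma hoeffding_mgf {Ω : Type*} [MeasurableSpace Ω] (μ : Measure Ω)
    [IsProbabilityMeasure μ] (X : Ω → ℝ) (hX : Measurable X) (a b : ℝ)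
    (hbdd : ∀ ω, a ≤ X ω ∧ X ω ≤ b) (hmean : μ[X] = 0) (t : ℝ) :
    mgf X μ t ≤ Real.exp (t ^ 2 * (b - a) ^ 2 / 8) := by
  have intX : Integrable X μ := integrable_of_bddIcc hX a b hbdd
  have ha0 : a ≤ 0 := by
    have h1 : ∫ _, a ∂μ ≤ ∫ ω, X ω ∂μ :=
      integral_mono (integrable_const a) intX fun ω => (hbdd ω).1
    simpa [hmean] using h1
  have hb0 : 0 ≤ b := by
    have h1 : ∫ ω, X ω ∂μ ≤ ∫ _, b ∂μ :=
      integral_mono intX (integrable_const b) fun ω => (hbdd ω).2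
    simpa [hmean] using h1
  rcases eq_or_lt_of_le (ha0.trans hb0) with hab | hab
  · -- a = b, hence a = b = 0 and X ≡ 0
    have ha : a = 0 := le_antisymm ha0 (hab ▸ hb0 : (0:ℝ) ≤ a)
    have hX0 : ∀ ω, X ω = 0 := fun ω =>
      le_antisymm (ha ▸ hab ▸ (hbdd ω).2) (ha ▸ (hbdd ω).1)
    have : mgf X μ t = 1 := by
      simp only [mgf]
      simp [hX0]
    rw [this]
    exact Real.one_le_exp (by positivity)
  · set c : ℝ := b - a with hc
    have hcpos : 0 < c := by simp [hc]; linarith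
    set p : ℝ := -a / c with hp
    have hp0 : 0 ≤ p := div_nonneg (by linarith) hcpos.le
    have hp1 : p ≤ 1 := by
      rw [hp, div_le_one hcpos]
      linarith
    set h : ℝ := t * c with hh
    have hintexp : Integrable (fun ω => Real.exp (t * X ω)) μ :=
      integrable_exp_of_bddIcc hX a b t hbdd
    -- pointwise convexity bound
    have hpt : ∀ ω, Real.exp (t * X ω) ≤
        (b - X ω) / c * Real.exp (t * a) + (X ω - a) / c * Real.exp (t * b) := by
      intro ω
      have l1 : 0 ≤ (b - X ω) / c := div_nonneg (by linarith [(hbdd ω).2]) hcpos.le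
      have l2 : 0 ≤ (X ω - a) / c := div_nonneg (by linarith [(hbdd ω).1]) hcpos.le
      have lsum : (b - X ω) / c + (X ω - a) / c = 1 := by
        field_simp
        rw [hc]; ring
      have hconv := convexOn_exp.2 (Set.mem_univ (t * a)) (Set.mem_univ (t * b)) l1 l2 lsum
      have heq : ((b - X ω) / c) • (t * a) + ((X ω - a) / c) • (t * b) = t * X ω := by
        simp only [smul_eq_mul, hc]
        field_simp
        ring
      rw [heq] at hconv
      simpa [smul_eq_mul] using hconv
    -- integrate
    have int1 : Integrable (fun ω => (b - X ω) / c * Real.exp (t * a)) μ :=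
      (((integrable_const b).sub intX).div_const c).mul_const _
    have int2 : Integrable (fun ω => (X ω - a) / c * Real.exp (t * b)) μ :=
      ((intX.sub (integrable_const a)).div_const c).mul_const _
    have hmgf_le : mgf X μ t ≤ b / c * Real.exp (t * a) + (-a) / c * Real.exp (t * b) := by
      have h1 : mgf X μ t ≤ ∫ ω, ((b - X ω) / c * Real.exp (t * a)
          + (X ω - a) / c * Real.exp (t * b)) ∂μ :=
        integral_mono hintexp (int1.add int2) hpt
      refine h1.trans_eq ?_
      rw [integral_add int1 int2]
      rw [integral_mul_const, integral_mul_const, integral_div, integral_div,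
        integral_sub (integrable_const b) intX, integral_sub intX (integrable_const a)]
      simp [hmean]
    refine hmgf_le.trans ?_
    have hta : t * a = -(p * h) := by
      rw [hp, hh]
      field_simp
    have htb : t * b = -(p * h) + h := by
      rw [hp, hh, hc]
      field_simp
      ring
    have hb_c : b / c = 1 - p := by
      rw [hp, hc]
      field_simp
      ring
    have ha_c : (-a) / c = p := rfl
    have hdpos := hoeffding_d_pos p hp0 hp1 h
    have hE : b / c * Real.exp (t * a) + (-a) / c * Real.exp (t * b)
        = Real.exp (-(p * h) + Real.log (1 - p + p * Real.exp h)) := by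
      rw [Real.exp_add, Real.exp_log hdpos, hb_c, ha_c, hta, htb, Real.exp_add]
      ring
    rw [hE]
    have hkey := hoeffding_key p hp0 hp1 h
    have : h ^ 2 / 8 = t ^ 2 * (b - a) ^ 2 / 8 := by
      rw [hh, hc, mul_pow]
    rw [this] at hkey
    exact Real.exp_le_exp.mpr hkey

/-- **Hoeffding's inequality** (upper tail) for i.i.d.-type bounded zero-mean sums. -/
lemma hoeffding_tail {Ω : Type*} [MeasurableSpace Ω] (μ : Measure Ω)
    [IsProbabilityMeasure μ] (Y : ℕ → Ω → ℝ) (hYmeas : ∀ i, Measurable (Y i))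
    (hYindep : iIndepFun Y μ)
    (a b : ℝ) (hab : a < b) (hbdd : ∀ i ω, a ≤ Y i ω ∧ Y i ω ≤ b)
    (hmean : ∀ i, μ[Y i] = 0) (L : ℕ) (hL : 0 < L) (e : ℝ) (he : 0 < e) :
    μ {ω | (L : ℝ) * e ≤ (∑ l ∈ Finset.range L, Y l) ω} ≤
      ENNReal.ofReal (Real.exp (-(2 * L * e ^ 2 / (b - a) ^ 2))) := by
  set c : ℝ := b - a with hcdef
  have hcpos : 0 < c := by simp [hcdef]; linarith
  set t : ℝ := 4 * e / c ^ 2 with htdef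
  have ht : 0 < t := by positivity
  have hint : ∀ i, Integrable (fun ω => Real.exp (t * Y i ω)) μ := fun i =>
    integrable_exp_of_bddIcc (hYmeas i) a b t (hbdd i)
  have h_int : Integrable (fun ω => Real.exp (t * (∑ l ∈ Finset.range L, Y l) ω)) μ :=
    hYindep.integrable_exp_mul_sum hYmeas fun i _ => hint i
  have hcher := measure_ge_le_exp_mul_mgf (μ := μ) (X := ∑ l ∈ Finset.range L, Y l)
    ((L : ℝ) * e) ht.le h_int
  have hmgf : mgf (∑ l ∈ Finset.range L, Y l) μ t ≤ Real.exp ((L : ℝ) * (t ^ 2 * c ^ 2 / 8)) := by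
    rw [hYindep.mgf_sum hYmeas]
    calc ∏ l ∈ Finset.range L, mgf (Y l) μ t
        ≤ ∏ _l ∈ Finset.range L, Real.exp (t ^ 2 * c ^ 2 / 8) := by
          refine Finset.prod_le_prod (fun i _ => mgf_nonneg) fun i _ => ?_
          exact hoeffding_mgf μ (Y i) (hYmeas i) a b (hbdd i) (hmean i) t
      _ = Real.exp ((L : ℝ) * (t ^ 2 * c ^ 2 / 8)) := by
          rw [Finset.prod_const, Finset.card_range, ← Real.exp_nat_mul]
  have hbound : Real.exp (-t * ((L : ℝ) * e)) * mgf (∑ l ∈ Finset.range L, Y l) μ t ≤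
      Real.exp (-(2 * L * e ^ 2 / c ^ 2)) := by
    calc Real.exp (-t * ((L : ℝ) * e)) * mgf (∑ l ∈ Finset.range L, Y l) μ t
        ≤ Real.exp (-t * ((L : ℝ) * e)) * Real.exp ((L : ℝ) * (t ^ 2 * c ^ 2 / 8)) := by
          exact mul_le_mul_of_nonneg_left hmgf (Real.exp_pos _).le
      _ = Real.exp (-t * ((L : ℝ) * e) + (L : ℝ) * (t ^ 2 * c ^ 2 / 8)) := by
          rw [← Real.exp_add]
      _ = Real.exp (-(2 * L * e ^ 2 / c ^ 2)) := by
          congr 1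
          rw [htdef]
          field_simp
          ring
  calc μ {ω | (L : ℝ) * e ≤ (∑ l ∈ Finset.range L, Y l) ω}
      = ENNReal.ofReal (μ {ω | (L : ℝ) * e ≤ (∑ l ∈ Finset.range L, Y l) ω}).toReal := by
        rw [ENNReal.ofReal_toReal (measure_ne_top μ _)]
    _ ≤ ENNReal.ofReal (Real.exp (-(2 * L * e ^ 2 / c ^ 2))) :=
        ENNReal.ofReal_le_ofReal (hcher.trans hbound)

end Aux

set_option maxHeartbeats 2000000 in
/-- Bias bound for the bMC ratio estimator, degenerate case (`E[φ'(ε)] = 0`): for i.i.d.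
standard Gaussians `ε^{(ℓ)}`, bounded `0 ≤ φ ≤ B`, `b' ≤ φ' ≤ B'`, `E[φ(ε)] ≥ ζ > 0`,
`α ∈ (0, 1/2]`, `δ ∈ (0,1)`, and `L > max{(B'−b')², B²/ζ²}·log(4/δ)/(2α²)`, with
probability at least `1 − δ` the ratio of sample sums satisfies
`|∑φ'(ε^{(ℓ)}) / ∑φ(ε^{(ℓ)})| ≤ α/(ζ(1−α)) ≤ 2α/ζ`. -/
theorem bMC_ratio_bound_zero_mean
    {Ω : Type*} [MeasurableSpace Ω] (P : Measure Ω) [IsProbabilityMeasure P]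
    (ε : ℕ → Ω → ℝ) (hmeas : ∀ i, Measurable (ε i))
    (hindep : iIndepFun ε P)
    (hgauss : ∀ i, P.map (ε i) = gaussianReal 0 1)
    (φ φ' : ℝ → ℝ) (hφ_meas : Measurable φ) (hφ'_meas : Measurable φ')
    (B b' B' ζ : ℝ)
    (hφ_bdd : ∀ x, 0 ≤ φ x ∧ φ x ≤ B)
    (hφ'_bdd : ∀ x, b' ≤ φ' x ∧ φ' x ≤ B')
    (hζ : 0 < ζ)
    (hEφ : ζ ≤ ∫ x, φ x ∂(gaussianReal 0 1))
    (hEφ' : (∫ x, φ' x ∂(gaussianReal 0 1)) = 0)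
    (α δ : ℝ) (hα : α ∈ Set.Ioc (0 : ℝ) (1 / 2)) (hδ : δ ∈ Set.Ioo (0 : ℝ) 1)
    (L : ℕ)
    (hL : (L : ℝ) >
      max ((B' - b') ^ 2) (B ^ 2 / ζ ^ 2) * Real.log (4 / δ) / (2 * α ^ 2)) :
    ENNReal.ofReal (1 - δ) ≤
      P {ω | |(∑ l ∈ Finset.range L, φ' (ε l ω)) / (∑ l ∈ Finset.range L, φ (ε l ω))|
              ≤ α / (ζ * (1 - α))} ∧
    α / (ζ * (1 - α)) ≤ 2 * α / ζ := by
  obtain ⟨hα0, hα2⟩ := hα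
  obtain ⟨hδ0, hδ1⟩ := hδ
  have h1α : 0 < 1 - α := by linarith
  have hcon2 : α / (ζ * (1 - α)) ≤ 2 * α / ζ := by
    rw [div_le_div_iff₀ (by positivity) hζ]
    nlinarith [mul_nonneg (mul_nonneg hα0.le hζ.le) (show (0:ℝ) ≤ 1 - 2*α by linarith)]
  refine ⟨?_, hcon2⟩
  have intφ : Integrable φ (gaussianReal 0 1) := integrable_of_bddIcc hφ_meas 0 B hφ_bdd
  have intφ' : Integrable φ' (gaussianReal 0 1) := integrable_of_bddIcc hφ'_meas b' B' hφ'_bdd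
  set m : ℝ := ∫ x, φ x ∂(gaussianReal 0 1) with hm
  have hmζ : ζ ≤ m := hEφ
  have hmB : m ≤ B := by
    have := integral_mono intφ (integrable_const B) fun x => (hφ_bdd x).2
    simpa using this
  have hB : 0 < B := lt_of_lt_of_le hζ (hmζ.trans hmB)
  have hb'0 : b' ≤ 0 := by
    have := integral_mono (integrable_const b') intφ' fun x => (hφ'_bdd x).1
    simpa [hEφ'] using this
  have hB'0 : 0 ≤ B' := by
    have := integral_mono intφ' (integrable_const B') fun x => (hφ'_bdd x).2
    simpa [hEφ'] using this
  have hlog : 0 < Real.log (4 / δ) := Real.log_pos (by rw [lt_div_iff₀ hδ0]; linarith)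
  have hmaxpos : 0 < max ((B' - b') ^ 2) (B ^ 2 / ζ ^ 2) :=
    lt_max_of_lt_right (by positivity)
  have hLR : (0 : ℝ) < (L : ℝ) := lt_trans (by positivity) hL
  have hLpos : 0 < L := Nat.cast_pos.mp hLR
  -- generic exponential bound
  have hexp : ∀ u : ℝ, 0 < u → u ≤ max ((B' - b') ^ 2) (B ^ 2 / ζ ^ 2) →
      Real.exp (-(2 * L * α ^ 2 / u)) ≤ δ / 4 := by
    intro u hu humax
    rw [show δ / 4 = Real.exp (Real.log (δ / 4)) from (Real.exp_log (by linarith)).symm,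
      Real.exp_le_exp]
    have hlogeq : Real.log (δ / 4) = -Real.log (4 / δ) := by
      rw [show (δ : ℝ) / 4 = (4 / δ)⁻¹ by field_simp, Real.log_inv]
    rw [hlogeq, neg_le_neg_iff, le_div_iff₀ hu]
    have h1 : u * Real.log (4 / δ) / (2 * α ^ 2) ≤
        max ((B' - b') ^ 2) (B ^ 2 / ζ ^ 2) * Real.log (4 / δ) / (2 * α ^ 2) := by
      gcongr
    have h2 := lt_of_le_of_lt h1 hL
    rw [div_lt_iff₀ (by positivity)] at h2
    nlinarith
  rcases eq_or_lt_of_le (hb'0.trans hB'0) with hbB | hbB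
  · -- degenerate case b' = B' (hence φ' ≡ 0)
    have hb'z : b' = 0 := le_antisymm hb'0 (by rw [hbB]; exact hB'0)
    have hφ'0 : ∀ x, φ' x = 0 := fun x => by
      have h1 := (hφ'_bdd x).1
      have h2 := (hφ'_bdd x).2
      rw [hb'z] at h1
      rw [← hbB, hb'z] at h2
      linarith
    have hset : {ω | |(∑ l ∈ Finset.range L, φ' (ε l ω)) /
        (∑ l ∈ Finset.range L, φ (ε l ω))| ≤ α / (ζ * (1 - α))} = Set.univ := by
      ext ω
      simp only [Set.mem_setOf_eq, Set.mem_univ, iff_true, hφ'0, Finset.sum_const_zero,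
        zero_div, abs_zero]
      positivity
    rw [hset]
    simp only [measure_univ]
    exact ENNReal.ofReal_le_one.mpr (by linarith)
  · -- main case b' < B'
    have htrans : ∀ (f : ℝ → ℝ), Measurable f → ∀ i : ℕ,
        ∫ ω, (f ∘ ε i) ω ∂P = ∫ x, f x ∂(gaussianReal 0 1) := by
      intro f hf i
      rw [← hgauss i, integral_map (hmeas i).aemeasurable hf.aestronglyMeasurable]
      rfl
    set A1 : Set Ω := {ω | (L : ℝ) * α ≤ ∑ l ∈ Finset.range L, φ' (ε l ω)} with hA1def
    set A2 : Set Ω := {ω | (L : ℝ) * α ≤ ∑ l ∈ Finset.range L, -φ' (ε l ω)} with hA2def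
    set A3 : Set Ω := {ω | (L : ℝ) * (α * ζ) ≤
        ∑ l ∈ Finset.range L, (m - φ (ε l ω))} with hA3def
    have hA1 : P A1 ≤ ENNReal.ofReal (δ / 4) := by
      have h := hoeffding_tail P (fun i => φ' ∘ ε i)
        (fun i => hφ'_meas.comp (hmeas i))
        (hindep.comp (fun _ => φ') fun _ => hφ'_meas) b' B' hbB
        (fun i ω => ⟨(hφ'_bdd (ε i ω)).1, (hφ'_bdd (ε i ω)).2⟩)
        (fun i => by rw [htrans φ' hφ'_meas i, hEφ']) L hLpos α hα0
      have hseteq : {ω | (L : ℝ) * α ≤ (∑ l ∈ Finset.range L, (fun i => φ' ∘ ε i) l) ω}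
          = A1 := by
        ext ω
        simp [Finset.sum_apply, hA1def]
      rw [hseteq] at h
      exact h.trans (ENNReal.ofReal_le_ofReal
        (hexp ((B' - b') ^ 2) (pow_pos (by linarith) 2) (le_max_left _ _)))
    have hA2 : P A2 ≤ ENNReal.ofReal (δ / 4) := by
      have h := hoeffding_tail P (fun i => (fun x => -φ' x) ∘ ε i)
        (fun i => hφ'_meas.neg.comp (hmeas i))
        (hindep.comp (fun _ => fun x => -φ' x) fun _ => hφ'_meas.neg)
        (-B') (-b') (by linarith)
        (fun i ω => ⟨by simp only [Function.comp_apply]; linarith [(hφ'_bdd (ε i ω)).2],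
          by simp only [Function.comp_apply]; linarith [(hφ'_bdd (ε i ω)).1]⟩)
        (fun i => by
          have : ∫ ω, ((fun x => -φ' x) ∘ ε i) ω ∂P = ∫ x, -φ' x ∂(gaussianReal 0 1) :=
            htrans _ hφ'_meas.neg i
          rw [this, integral_neg, hEφ', neg_zero]) L hLpos α hα0
      rw [show (-b' - -B' : ℝ) = B' - b' by ring] at h
      have hseteq : {ω | (L : ℝ) * α ≤
          (∑ l ∈ Finset.range L, (fun i => (fun x => -φ' x) ∘ ε i) l) ω} = A2 := by
        ext ω
        simp [Finset.sum_apply, hA2def]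
      rw [hseteq] at h
      exact h.trans (ENNReal.ofReal_le_ofReal
        (hexp ((B' - b') ^ 2) (pow_pos (by linarith) 2) (le_max_left _ _)))
    have hA3 : P A3 ≤ ENNReal.ofReal (δ / 4) := by
      have h := hoeffding_tail P (fun i => (fun x => m - φ x) ∘ ε i)
        (fun i => (measurable_const.sub hφ_meas).comp (hmeas i))
        (hindep.comp (fun _ => fun x => m - φ x) fun _ => measurable_const.sub hφ_meas)
        (m - B) m (by linarith)
        (fun i ω => ⟨by simp only [Function.comp_apply]; linarith [(hφ_bdd (ε i ω)).2],
          by simp only [Function.comp_apply]; linarith [(hφ_bdd (ε i ω)).1]⟩)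
        (fun i => by
          have : ∫ ω, ((fun x => m - φ x) ∘ ε i) ω ∂P = ∫ x, m - φ x ∂(gaussianReal 0 1) :=
            htrans _ (measurable_const.sub hφ_meas) i
          rw [this, integral_sub (integrable_const m) intφ]
          simp [hm]) L hLpos (α * ζ) (by positivity)
      rw [show (m - (m - B) : ℝ) = B by ring] at h
      have hexpeq : -(2 * (L : ℝ) * (α * ζ) ^ 2 / B ^ 2) = -(2 * L * α ^ 2 / (B ^ 2 / ζ ^ 2)) := by
        rw [neg_inj]
        field_simp
      rw [hexpeq] at h
      have hseteq : {ω | (L : ℝ) * (α * ζ) ≤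
          (∑ l ∈ Finset.range L, (fun i => (fun x => m - φ x) ∘ ε i) l) ω} = A3 := by
        ext ω
        simp [Finset.sum_apply, hA3def]
      rw [hseteq] at h
      exact h.trans (ENNReal.ofReal_le_ofReal
        (hexp (B ^ 2 / ζ ^ 2) (div_pos (pow_pos hB 2) (pow_pos hζ 2)) (le_max_right _ _)))
    have hm1 : Measurable fun ω => ∑ l ∈ Finset.range L, φ' (ε l ω) :=
      Finset.measurable_sum _ fun i _ => hφ'_meas.comp (hmeas i)
    have hm2 : Measurable fun ω => ∑ l ∈ Finset.range L, -φ' (ε l ω) :=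
      Finset.measurable_sum _ fun i _ => (hφ'_meas.comp (hmeas i)).neg
    have hm3 : Measurable fun ω => ∑ l ∈ Finset.range L, (m - φ (ε l ω)) :=
      Finset.measurable_sum _ fun i _ => measurable_const.sub (hφ_meas.comp (hmeas i))
    have hmeasSet : MeasurableSet (A1 ∪ A2 ∪ A3) :=
      ((measurableSet_le measurable_const hm1).union
        (measurableSet_le measurable_const hm2)).union
        (measurableSet_le measurable_const hm3)
    have hsub : (A1 ∪ A2 ∪ A3)ᶜ ⊆
        {ω | |(∑ l ∈ Finset.range L, φ' (ε l ω)) / (∑ l ∈ Finset.range L, φ (ε l ω))|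
          ≤ α / (ζ * (1 - α))} := by
      intro ω hω
      simp only [Set.mem_compl_iff, Set.mem_union, not_or, hA1def, hA2def, hA3def,
        Set.mem_setOf_eq, not_le] at hω
      obtain ⟨⟨h1, h2⟩, h3⟩ := hω
      have h2' : -((L : ℝ) * α) < ∑ l ∈ Finset.range L, φ' (ε l ω) := by
        have : ∑ l ∈ Finset.range L, -φ' (ε l ω) =
            -∑ l ∈ Finset.range L, φ' (ε l ω) := by
          rw [Finset.sum_neg_distrib]
        rw [this] at h2
        linarith
      have h3' : (L : ℝ) * m - ∑ l ∈ Finset.range L, φ (ε l ω) < (L : ℝ) * (α * ζ) := by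
        have : ∑ l ∈ Finset.range L, (m - φ (ε l ω)) =
            (L : ℝ) * m - ∑ l ∈ Finset.range L, φ (ε l ω) := by
          rw [Finset.sum_sub_distrib, Finset.sum_const, Finset.card_range, nsmul_eq_mul]
        rw [this] at h3
        exact h3
      have hLm : (L : ℝ) * ζ ≤ (L : ℝ) * m :=
        mul_le_mul_of_nonneg_left hmζ (Nat.cast_nonneg L)
      have hden : (L : ℝ) * (ζ * (1 - α)) ≤ ∑ l ∈ Finset.range L, φ (ε l ω) := by
        nlinarith
      have hdenpos : 0 < ∑ l ∈ Finset.range L, φ (ε l ω) :=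
        lt_of_lt_of_le (by positivity) hden
      have hnum : |∑ l ∈ Finset.range L, φ' (ε l ω)| ≤ (L : ℝ) * α :=
        (abs_lt.mpr ⟨h2', h1⟩).le
      show |(∑ l ∈ Finset.range L, φ' (ε l ω)) / (∑ l ∈ Finset.range L, φ (ε l ω))|
        ≤ α / (ζ * (1 - α))
      rw [abs_div, abs_of_pos hdenpos]
      calc |∑ l ∈ Finset.range L, φ' (ε l ω)| / ∑ l ∈ Finset.range L, φ (ε l ω)
          ≤ ((L : ℝ) * α) / ((L : ℝ) * (ζ * (1 - α))) :=
            div_le_div₀ (by positivity) hnum (by positivity) hden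
        _ = α / (ζ * (1 - α)) := mul_div_mul_left _ _ (ne_of_gt hLR)
    have hPU : P (A1 ∪ A2 ∪ A3) ≤ ENNReal.ofReal δ := by
      calc P (A1 ∪ A2 ∪ A3) ≤ P (A1 ∪ A2) + P A3 := measure_union_le _ _
        _ ≤ P A1 + P A2 + P A3 := add_le_add (measure_union_le _ _) le_rfl
        _ ≤ ENNReal.ofReal (δ / 4) + ENNReal.ofReal (δ / 4) + ENNReal.ofReal (δ / 4) :=
            add_le_add (add_le_add hA1 hA2) hA3
        _ = ENNReal.ofReal (δ / 4 + δ / 4 + δ / 4) := by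
            rw [← ENNReal.ofReal_add (by linarith) (by linarith),
              ← ENNReal.ofReal_add (by linarith) (by linarith)]
        _ ≤ ENNReal.ofReal δ := ENNReal.ofReal_le_ofReal (by linarith)
    calc ENNReal.ofReal (1 - δ) = 1 - ENNReal.ofReal δ := by
          rw [ENNReal.ofReal_sub 1 hδ0.le, ENNReal.ofReal_one]
      _ ≤ 1 - P (A1 ∪ A2 ∪ A3) := tsub_le_tsub_left hPU 1
      _ = P ((A1 ∪ A2 ∪ A3)ᶜ) := (prob_compl_eq_one_sub hmeasSet).symm
      _ ≤ P _ := measure_mono hsub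
end

section
/- Fix y ∈ ℕ and let g(f) = log(e^f + 1) (the softplus link) and φ(f) = g(f)^y e^{−g(f)} / y!. Then for all f ∈ ℝ: 0 ≤ φ(f) ≤ 1, the first derivative satisfies −1 ≤ φ'(f) ≤ 1, and the second derivative satisfies −2.25 ≤ φ''(f) ≤ 2.25. -/
open Real

/-- A Poisson pmf term is nonnegative. -/
lemma pois_nonneg (k : ℕ) {x : ℝ} (hx : 0 ≤ x) :
    0 ≤ x ^ k * Real.exp (-x) / (k.factorial : ℝ) := by positivity

/-- A Poisson pmf term is at most 1. -/
lemma pois_le_one (k : ℕ) {x : ℝ} (hx : 0 ≤ x) :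
    x ^ k * Real.exp (-x) / (k.factorial : ℝ) ≤ 1 := by
  have h := Real.pow_div_factorial_le_exp x hx k
  have he : 0 < Real.exp (-x) := Real.exp_pos _
  have hme : Real.exp (-x) * Real.exp x = 1 := by rw [← Real.exp_add]; simp
  calc x ^ k * Real.exp (-x) / (k.factorial : ℝ)
      = (x ^ k / (k.factorial : ℝ)) * Real.exp (-x) := by ring
    _ ≤ Real.exp x * Real.exp (-x) := mul_le_mul_of_nonneg_right h he.le
    _ = 1 := by rw [mul_comm]; exact hme

lemma coef1_bounds (k : ℕ) {x : ℝ} (hx : 0 ≤ x) :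
    0 ≤ (k : ℝ) * x ^ (k - 1) * Real.exp (-x) / (k.factorial : ℝ) ∧
    (k : ℝ) * x ^ (k - 1) * Real.exp (-x) / (k.factorial : ℝ) ≤ 1 := by
  cases k with
  | zero => simp
  | succ m =>
    have hfac : ((m + 1).factorial : ℝ) = (m + 1 : ℝ) * (m.factorial : ℝ) := by
      rw [Nat.factorial_succ]; push_cast; ring
    have hkey : ((m + 1 : ℕ) : ℝ) * x ^ ((m + 1) - 1) * Real.exp (-x) / ((m + 1).factorial : ℝ)
        = x ^ m * Real.exp (-x) / (m.factorial : ℝ) := by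
      have hm1 : (0:ℝ) < (m + 1 : ℝ) := by positivity
      have hmf : (0:ℝ) < (m.factorial : ℝ) := by positivity
      rw [hfac]
      push_cast
      field_simp
    rw [hkey]
    exact ⟨pois_nonneg m hx, pois_le_one m hx⟩

lemma coef2_bounds (k : ℕ) {x : ℝ} (hx : 0 ≤ x) :
    0 ≤ (k : ℝ) * ((k - 1 : ℕ) : ℝ) * x ^ (k - 1 - 1) * Real.exp (-x) / (k.factorial : ℝ) ∧
    (k : ℝ) * ((k - 1 : ℕ) : ℝ) * x ^ (k - 1 - 1) * Real.exp (-x) / (k.factorial : ℝ) ≤ 1 := by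
  match k with
  | 0 => simp
  | 1 => simp
  | (m + 2) =>
    have hfac : ((m + 2).factorial : ℝ) = (m + 2 : ℝ) * ((m + 1 : ℝ) * (m.factorial : ℝ)) := by
      rw [Nat.factorial_succ, Nat.factorial_succ]; push_cast; ring
    have hkey : ((m + 2 : ℕ) : ℝ) * (((m + 2) - 1 : ℕ) : ℝ) * x ^ ((m + 2) - 1 - 1) *
        Real.exp (-x) / ((m + 2).factorial : ℝ)
        = x ^ m * Real.exp (-x) / (m.factorial : ℝ) := by
      have hmf : (0:ℝ) < (m.factorial : ℝ) := by positivity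
      rw [hfac]
      push_cast
      field_simp
    rw [hkey]
    exact ⟨pois_nonneg m hx, pois_le_one m hx⟩

lemma first_deriv_bound {a b s : ℝ} (ha0 : 0 ≤ a) (ha1 : a ≤ 1) (hb0 : 0 ≤ b) (hb1 : b ≤ 1)
    (hs0 : 0 ≤ s) (hs1 : s ≤ 1) : -1 ≤ (a - b) * s ∧ (a - b) * s ≤ 1 := by
  constructor <;> nlinarith

lemma second_deriv_bound {a b c s : ℝ} (ha0 : 0 ≤ a) (ha1 : a ≤ 1) (hb0 : 0 ≤ b) (hb1 : b ≤ 1)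
    (hc0 : 0 ≤ c) (hc1 : c ≤ 1) (hs0 : 0 ≤ s) (hs1 : s ≤ 1) :
    -(2.25 : ℝ) ≤ (c - 2 * a + b) * s * s + (a - b) * (s * (1 - s)) ∧
    (c - 2 * a + b) * s * s + (a - b) * (s * (1 - s)) ≤ (2.25 : ℝ) := by
  constructor <;> nlinarith [sq_nonneg (2 * s - 1), sq_nonneg s, mul_nonneg hs0 hs0,
    mul_nonneg (mul_nonneg hs0 hs0) hc0, mul_nonneg (mul_nonneg hs0 hs0) ha0,
    mul_nonneg (mul_nonneg hs0 hs0) hb0]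

/-- Bounds for the Poisson likelihood with softplus link `g(f) = log(e^f + 1)`,
`φ(f) = g(f)^y e^{−g(f)} / y!`: `0 ≤ φ ≤ 1`, `−1 ≤ φ' ≤ 1` and `−2.25 ≤ φ'' ≤ 2.25`. -/
theorem poisson_softplus_likelihood_derivative_bounds
    (y : ℕ)
    (g : ℝ → ℝ) (hg : ∀ f : ℝ, g f = Real.log (Real.exp f + 1))
    (φ : ℝ → ℝ)
    (hφ : ∀ f : ℝ, φ f = g f ^ y * Real.exp (-g f) / (Nat.factorial y : ℝ)) :
    ∀ f : ℝ,
      (0 ≤ φ f ∧ φ f ≤ 1) ∧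
      (-1 ≤ deriv φ f ∧ deriv φ f ≤ 1) ∧
      (-(2.25 : ℝ) ≤ deriv (deriv φ) f ∧ deriv (deriv φ) f ≤ (2.25 : ℝ)) := by
  -- notation
  set L : ℝ → ℝ := fun t => Real.log (Real.exp t + 1) with hLdef
  set S : ℝ → ℝ := fun t => Real.exp t / (Real.exp t + 1) with hSdef
  have hgL : g = L := funext hg
  have hφL : φ = fun t => L t ^ y * Real.exp (-(L t)) / (y.factorial : ℝ) := by
    funext t; rw [hφ t, hg t]
  have hEpos : ∀ t : ℝ, (0:ℝ) < Real.exp t + 1 := fun t => by positivity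
  have hLpos : ∀ t : ℝ, 0 < L t := fun t =>
    Real.log_pos (by nlinarith [Real.exp_pos t])
  have hS0 : ∀ t : ℝ, 0 ≤ S t := fun t => by
    simp only [hSdef]; positivity
  have hS1 : ∀ t : ℝ, S t ≤ 1 := fun t => by
    simp only [hSdef]
    rw [div_le_one (hEpos t)]; linarith
  -- derivative of L
  have hGd : ∀ t : ℝ, HasDerivAt L (S t) t := fun t => by
    have h1 : HasDerivAt (fun u => Real.exp u + 1) (Real.exp t) t :=
      (Real.hasDerivAt_exp t).add_const 1
    exact h1.log (hEpos t).ne'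
  -- derivative of S
  have hSd : ∀ t : ℝ, HasDerivAt S (S t * (1 - S t)) t := fun t => by
    have h := (Real.hasDerivAt_exp t).div ((Real.hasDerivAt_exp t).add_const 1) (hEpos t).ne'
    refine h.congr_deriv ?_
    have h2 := (hEpos t).ne'
    simp only [hSdef]
    field_simp
  -- first derivative of φ
  set ψ : ℝ → ℝ := fun t =>
    (((y:ℝ) * L t ^ (y - 1) - L t ^ y) * Real.exp (-(L t)) / (y.factorial : ℝ)) * S t
    with hψdef
  have hΦd : ∀ t : ℝ, HasDerivAt φ (ψ t) t := fun t => by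
    have hpow : HasDerivAt (fun u : ℝ => u ^ y) ((y:ℝ) * L t ^ (y - 1)) (L t) :=
      hasDerivAt_pow y _
    have hexp : HasDerivAt (fun u : ℝ => Real.exp (-u)) (Real.exp (-(L t)) * (-1)) (L t) :=
      ((hasDerivAt_id (L t)).neg).exp
    have hH : HasDerivAt (fun u : ℝ => u ^ y * Real.exp (-u) / (y.factorial : ℝ))
        (((y:ℝ) * L t ^ (y - 1) * Real.exp (-(L t)) +
          L t ^ y * (Real.exp (-(L t)) * (-1))) / (y.factorial : ℝ)) (L t) :=
      (hpow.mul hexp).div_const _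
    have hc := hH.comp t (hGd t)
    rw [hφL]
    have : (fun u : ℝ => u ^ y * Real.exp (-u) / (y.factorial : ℝ)) ∘ L =
        fun t => L t ^ y * Real.exp (-(L t)) / (y.factorial : ℝ) := rfl
    rw [this] at hc
    refine hc.congr_deriv ?_
    simp only [hψdef]
    ring
  have hderiv1 : deriv φ = ψ := funext fun t => (hΦd t).deriv
  -- second derivative
  set D2 : ℝ → ℝ := fun t =>
    ((((y:ℝ) * (((y - 1 : ℕ) : ℝ) * L t ^ (y - 1 - 1)) - (y:ℝ) * L t ^ (y - 1)) *
        Real.exp (-(L t)) +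
      ((y:ℝ) * L t ^ (y - 1) - L t ^ y) * (Real.exp (-(L t)) * (-1))) / (y.factorial : ℝ) * S t)
      * S t
    + (((y:ℝ) * L t ^ (y - 1) - L t ^ y) * Real.exp (-(L t)) / (y.factorial : ℝ)) *
        (S t * (1 - S t)) with hD2def
  have hΨd : ∀ t : ℝ, HasDerivAt ψ (D2 t) t := fun t => by
    have h1 : HasDerivAt (fun u : ℝ => (y:ℝ) * u ^ (y - 1))
        ((y:ℝ) * (((y - 1 : ℕ) : ℝ) * L t ^ (y - 1 - 1))) (L t) :=
      (hasDerivAt_pow (y - 1) (L t)).const_mul (y:ℝ)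
    have h2 : HasDerivAt (fun u : ℝ => u ^ y) ((y:ℝ) * L t ^ (y - 1)) (L t) :=
      hasDerivAt_pow y _
    have hexp : HasDerivAt (fun u : ℝ => Real.exp (-u)) (Real.exp (-(L t)) * (-1)) (L t) :=
      ((hasDerivAt_id (L t)).neg).exp
    have hH1 : HasDerivAt
        (fun u : ℝ => ((y:ℝ) * u ^ (y - 1) - u ^ y) * Real.exp (-u) / (y.factorial : ℝ))
        ((((y:ℝ) * (((y - 1 : ℕ) : ℝ) * L t ^ (y - 1 - 1)) - (y:ℝ) * L t ^ (y - 1)) *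
            Real.exp (-(L t)) +
          ((y:ℝ) * L t ^ (y - 1) - L t ^ y) * (Real.exp (-(L t)) * (-1))) / (y.factorial : ℝ))
        (L t) := ((h1.sub h2).mul hexp).div_const _
    have hA := hH1.comp t (hGd t)
    have hAc : HasDerivAt
        (fun t : ℝ => ((y:ℝ) * L t ^ (y - 1) - L t ^ y) * Real.exp (-(L t)) / (y.factorial : ℝ))
        ((((y:ℝ) * (((y - 1 : ℕ) : ℝ) * L t ^ (y - 1 - 1)) - (y:ℝ) * L t ^ (y - 1)) *
            Real.exp (-(L t)) +
          ((y:ℝ) * L t ^ (y - 1) - L t ^ y) * (Real.exp (-(L t)) * (-1))) / (y.factorial : ℝ)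
          * S t) t := hA
    exact hAc.mul (hSd t)
  have hderiv2 : deriv (deriv φ) = D2 := by
    rw [hderiv1]; exact funext fun t => (hΨd t).deriv
  -- bounds
  intro f
  have hx : 0 < L f := hLpos f
  have hB := pois_nonneg y hx.le
  have hB1 := pois_le_one y hx.le
  have hA := coef1_bounds y hx.le
  have hC := coef2_bounds y hx.le
  refine ⟨⟨?_, ?_⟩, ?_, ?_⟩
  · rw [hφL]; exact hB
  · rw [hφL]; exact hB1
  · -- first derivative bounds
    rw [hderiv1]
    have key : ψ f =
        ((y:ℝ) * L f ^ (y - 1) * Real.exp (-(L f)) / (y.factorial : ℝ) -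
          L f ^ y * Real.exp (-(L f)) / (y.factorial : ℝ)) * S f := by
      simp only [hψdef]; ring
    rw [key]
    exact first_deriv_bound hA.1 hA.2 hB hB1 (hS0 f) (hS1 f)
  · -- second derivative bounds
    rw [hderiv2]
    have key : D2 f =
        (((y:ℝ) * ((y - 1 : ℕ) : ℝ) * L f ^ (y - 1 - 1) * Real.exp (-(L f)) / (y.factorial : ℝ))
          - 2 * ((y:ℝ) * L f ^ (y - 1) * Real.exp (-(L f)) / (y.factorial : ℝ))
          + (L f ^ y * Real.exp (-(L f)) / (y.factorial : ℝ))) * S f * S f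
        + (((y:ℝ) * L f ^ (y - 1) * Real.exp (-(L f)) / (y.factorial : ℝ))
            - (L f ^ y * Real.exp (-(L f)) / (y.factorial : ℝ))) * (S f * (1 - S f)) := by
      simp only [hD2def]; ring
    rw [key]
    exact second_deriv_bound hA.1 hA.2 hB hB1 hC.1 hC.2 (hS0 f) (hS1 f)
end

section
/- Fix y ∈ ℕ and let φ(f) = λ^y e^{−λ}/y! with λ = e^f (the exponential link). Then for all f ∈ ℝ: 0 ≤ φ(f) ≤ 1, the first derivative satisfies −(y+1) ≤ φ'(f) ≤ y, and the second derivative satisfies −(y + 1/4) ≤ φ''(f) ≤ 2y² + 3y + 2. -/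
lemma pmf_le_one' (k : ℕ) (t : ℝ) (ht : 0 ≤ t) :
    t ^ k * Real.exp (-t) / (Nat.factorial k : ℝ) ≤ 1 := by
  have h : t ^ k / (Nat.factorial k : ℝ) ≤ Real.exp t :=
    Real.pow_div_factorial_le_exp t ht k
  have hk : (0:ℝ) < (Nat.factorial k : ℝ) := by positivity
  have het : (0:ℝ) < Real.exp t := Real.exp_pos t
  rw [div_le_one hk, Real.exp_neg]
  rw [div_le_iff₀ hk] at h
  calc t ^ k * (Real.exp t)⁻¹ ≤ Real.exp t * (Nat.factorial k : ℝ) * (Real.exp t)⁻¹ := by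
        gcongr
    _ = (Nat.factorial k : ℝ) := by field_simp

/-- Bounds for the Poisson likelihood with exponential link `λ = e^f`,
`φ(f) = λ^y e^{−λ} / y!`: `0 ≤ φ ≤ 1`, `−(y+1) ≤ φ' ≤ y` and
`−(y + 1/4) ≤ φ'' ≤ 2y² + 3y + 2`. -/
theorem poisson_exp_likelihood_derivative_bounds
    (y : ℕ)
    (φ : ℝ → ℝ)
    (hφ : ∀ f : ℝ, φ f = Real.exp f ^ y * Real.exp (-Real.exp f) / (Nat.factorial y : ℝ)) :
    ∀ f : ℝ,
      (0 ≤ φ f ∧ φ f ≤ 1) ∧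
      (-((y : ℝ) + 1) ≤ deriv φ f ∧ deriv φ f ≤ (y : ℝ)) ∧
      (-((y : ℝ) + 1 / 4) ≤ deriv (deriv φ) f ∧
        deriv (deriv φ) f ≤ 2 * (y : ℝ) ^ 2 + 3 * (y : ℝ) + 2) := by
  have hφfun : φ = fun f => Real.exp f ^ y * Real.exp (-Real.exp f) / (Nat.factorial y : ℝ) :=
    funext hφ
  -- first derivative
  have hD : ∀ f : ℝ, HasDerivAt φ (φ f * ((y : ℝ) - Real.exp f)) f := by
    intro f
    have hexp : HasDerivAt Real.exp (Real.exp f) f := Real.hasDerivAt_exp f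
    have h1 : HasDerivAt (fun x => Real.exp x ^ y)
        ((y : ℝ) * Real.exp f ^ (y - 1) * Real.exp f) f := hexp.pow y
    have h2 : HasDerivAt (fun x => Real.exp (-Real.exp x))
        (Real.exp (-Real.exp f) * -Real.exp f) f := hexp.neg.exp
    have h3 := (h1.mul h2).div_const (Nat.factorial y : ℝ)
    rw [hφfun]
    refine h3.congr_deriv ?_
    have hfac : (0:ℝ) < (Nat.factorial y : ℝ) := by positivity
    rcases y with _ | n
    · simp
    · simp only [Nat.add_sub_cancel]
      have : Real.exp f ^ n * Real.exp f = Real.exp f ^ (n + 1) := (pow_succ _ _).symm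
      field_simp
      ring_nf
  have hDeq : deriv φ = fun f => φ f * ((y : ℝ) - Real.exp f) :=
    funext fun f => (hD f).deriv
  -- second derivative
  have hD2 : ∀ f : ℝ, HasDerivAt (deriv φ)
      (φ f * (((y : ℝ) - Real.exp f) ^ 2 - Real.exp f)) f := by
    intro f
    have hexp : HasDerivAt Real.exp (Real.exp f) f := Real.hasDerivAt_exp f
    have hsub : HasDerivAt (fun x => (y : ℝ) - Real.exp x) (-Real.exp f) f := hexp.const_sub _
    have := (hD f).mul hsub
    rw [hDeq]
    refine this.congr_deriv ?_
    ring
  intro f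
  set L := Real.exp f with hL
  have hL0 : 0 < L := Real.exp_pos f
  set p : ℕ → ℝ := fun k => L ^ k * Real.exp (-L) / (Nat.factorial k : ℝ) with hp
  have hp0 : ∀ k, 0 ≤ p k := fun k => by positivity
  have hp1 : ∀ k, p k ≤ 1 := fun k => pmf_le_one' k L hL0.le
  have hφp : φ f = p y := hφ f
  have key1 : p y * L = ((y : ℝ) + 1) * p (y + 1) := by
    simp only [hp, Nat.factorial_succ, pow_succ]
    push_cast
    have hfy : (0:ℝ) < (Nat.factorial y : ℝ) := by positivity
    field_simp
  have key2 : p (y + 1) * L = ((y : ℝ) + 2) * p (y + 2) := by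
    simp only [hp, Nat.factorial_succ, pow_succ]
    push_cast
    have hfy : (0:ℝ) < (Nat.factorial (y+1) : ℝ) := by positivity
    field_simp
    ring
  have hd1 : deriv φ f = p y * ((y : ℝ) - L) := by rw [hDeq]; simp only [hφp, hL]
  have hd2 : deriv (deriv φ) f = p y * (((y : ℝ) - L) ^ 2 - L) := by
    rw [(hD2 f).deriv, hφp]
  have hy0 : (0:ℝ) ≤ (y : ℝ) := Nat.cast_nonneg y
  refine ⟨⟨by rw [hφp]; exact hp0 y, by rw [hφp]; exact hp1 y⟩, ⟨?_, ?_⟩, ⟨?_, ?_⟩⟩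
  · rw [hd1]
    nlinarith [hp0 y, hp1 y, hp0 (y+1), hp1 (y+1), key1]
  · rw [hd1]
    nlinarith [hp0 y, hp1 y, key1, hp0 (y+1)]
  · rw [hd2]
    have hh : -((y : ℝ) + 1/4) ≤ ((y : ℝ) - L) ^ 2 - L := by nlinarith [sq_nonneg (L - (y:ℝ) - 1/2)]
    nlinarith [hp0 y, hp1 y, hh]
  · rw [hd2]
    have k2 : p y * L ^ 2 = ((y : ℝ) + 1) * (((y : ℝ) + 2) * p (y + 2)) := by
      calc p y * L ^ 2 = (p y * L) * L := by ring
        _ = ((y : ℝ) + 1) * (p (y+1) * L) := by rw [key1]; ring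
        _ = _ := by rw [key2]
    nlinarith [hp0 y, hp1 y, key1, hp0 (y+1), hp1 (y+1), hp0 (y+2), hp1 (y+2), k2, hL0,
      mul_nonneg (hp0 y) hL0.le, mul_nonneg (mul_nonneg (hp0 y) hL0.le) hy0]
end

section
/- Fix y ∈ ℝ, σ > 0 and ν > 0, let c = Γ((ν+1)/2)/(Γ(ν/2)√(πν) σ), and define the Student's t likelihood φ(f) = c · (1 + (y−f)²/(σ²ν))^{−(ν+1)/2}. Then for all f ∈ ℝ: 0 ≤ φ(f) ≤ c; the first derivative satisfies |φ'(f)| ≤ (c/σ)·((ν+1)/ν)·√(ν/(ν+2)) / ((ν+3)/(ν+2))^{(ν+3)/2}; and the second derivative satisfies −(c/σ²)·(ν+1)/ν ≤ φ''(f) ≤ 2(c/σ²)·((ν+1)/ν)·((ν+2)/(ν+5))^{(ν+5)/2}. -/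
private lemma stl_base_hasDerivAt (y a x : ℝ) :
    HasDerivAt (fun f : ℝ => 1 + (y - f) ^ 2 / a) (-(2 * (y - x)) / a) x := by
  have h1 : HasDerivAt (fun f : ℝ => y - f) (-1) x := (hasDerivAt_id x).const_sub y
  have h3 := ((h1.pow 2).div_const a).const_add 1
  refine h3.congr_deriv ?_
  push_cast
  ring

private lemma stl_rpow_hasDerivAt (y A e x : ℝ) (hA : 0 < A) :
    HasDerivAt (fun f : ℝ => (1 + (y - f) ^ 2 / A) ^ e)
      (-(2 * (y - x)) / A * e * (1 + (y - x) ^ 2 / A) ^ (e - 1)) x := by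
  refine (stl_base_hasDerivAt y A x).rpow_const (Or.inl ?_)
  positivity

private lemma stl_key1 (σ ν t : ℝ) (hσ : 0 < σ) (hν : 0 < ν) :
    |t| * (1 + t ^ 2 / (σ ^ 2 * ν)) ^ (-((ν + 3) / 2)) ≤
      σ * (Real.sqrt (ν / (ν + 2)) / ((ν + 3) / (ν + 2)) ^ ((ν + 3) / 2)) := by
  have hA : (0:ℝ) < σ ^ 2 * ν := by positivity
  set U : ℝ := 1 + t ^ 2 / (σ ^ 2 * ν) with hUdef
  have hU0 : (0:ℝ) < U := by positivity
  have hB : (0:ℝ) < (ν + 3) / (ν + 2) := by positivity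
  have hQ : (0:ℝ) < ((ν + 3) / (ν + 2)) ^ (ν + 3) := Real.rpow_pos_of_pos hB _
  have hP : (0:ℝ) < U ^ (ν + 3) := Real.rpow_pos_of_pos hU0 _
  have hRHS : (0:ℝ) ≤ σ * (Real.sqrt (ν / (ν + 2)) / ((ν + 3) / (ν + 2)) ^ ((ν + 3) / 2)) := by
    have := Real.rpow_pos_of_pos hB ((ν + 3) / 2)
    positivity
  have hLHS : (0:ℝ) ≤ |t| * U ^ (-((ν + 3) / 2)) := by positivity
  rw [← pow_le_pow_iff_left₀ hLHS hRHS (two_ne_zero)]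
  have e1 : (|t| * U ^ (-((ν + 3) / 2))) ^ 2 = t ^ 2 * U ^ (-(ν + 3)) := by
    rw [mul_pow, sq_abs, ← Real.rpow_natCast (U ^ (-((ν + 3) / 2))) 2,
      ← Real.rpow_mul hU0.le]
    norm_num
  have e2 : (σ * (Real.sqrt (ν / (ν + 2)) / ((ν + 3) / (ν + 2)) ^ ((ν + 3) / 2))) ^ 2
      = σ ^ 2 * (ν / (ν + 2) / ((ν + 3) / (ν + 2)) ^ (ν + 3)) := by
    rw [mul_pow, div_pow, Real.sq_sqrt (by positivity : (0:ℝ) ≤ ν / (ν + 2)),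
      ← Real.rpow_natCast (((ν + 3) / (ν + 2)) ^ ((ν + 3) / 2)) 2,
      ← Real.rpow_mul hB.le]
    norm_num
  rw [e1, e2]
  have hber : (ν + 2) * (t ^ 2 / (σ ^ 2 * ν)) ≤ ((ν + 2) / (ν + 3) * U) ^ (ν + 3) := by
    have hx : (0:ℝ) < (ν + 2) / (ν + 3) * U := by positivity
    have hs : (-1:ℝ) ≤ (ν + 2) / (ν + 3) * U - 1 := by linarith
    have h := one_add_mul_self_le_rpow_one_add hs (p := ν + 3) (by linarith)
    have e3 : 1 + ((ν + 2) / (ν + 3) * U - 1) = (ν + 2) / (ν + 3) * U := by ring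
    have e4 : 1 + (ν + 3) * ((ν + 2) / (ν + 3) * U - 1) = (ν + 2) * (t ^ 2 / (σ ^ 2 * ν)) := by
      rw [hUdef]
      field_simp
      ring
    rw [e3, e4] at h
    exact h
  have e5 : ((ν + 2) / (ν + 3) * U) ^ (ν + 3)
      = (((ν + 3) / (ν + 2)) ^ (ν + 3))⁻¹ * U ^ (ν + 3) := by
    rw [Real.mul_rpow (by positivity) hU0.le, ← Real.inv_rpow hB.le]
    congr 2
    field_simp
  rw [e5] at hber
  rw [Real.rpow_neg hU0.le, ← div_eq_mul_inv]
  rw [show σ ^ 2 * (ν / (ν + 2) / ((ν + 3) / (ν + 2)) ^ (ν + 3))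
      = (σ ^ 2 * (ν / (ν + 2))) / ((ν + 3) / (ν + 2)) ^ (ν + 3) by ring]
  rw [div_le_div_iff₀ hP hQ]
  have h7 := mul_le_mul_of_nonneg_left hber
    (show (0:ℝ) ≤ σ ^ 2 * ν / (ν + 2) * ((ν + 3) / (ν + 2)) ^ (ν + 3) by positivity)
  calc t ^ 2 * ((ν + 3) / (ν + 2)) ^ (ν + 3)
      = σ ^ 2 * ν / (ν + 2) * ((ν + 3) / (ν + 2)) ^ (ν + 3)
          * ((ν + 2) * (t ^ 2 / (σ ^ 2 * ν))) := by
        field_simp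
    _ ≤ σ ^ 2 * ν / (ν + 2) * ((ν + 3) / (ν + 2)) ^ (ν + 3)
          * ((((ν + 3) / (ν + 2)) ^ (ν + 3))⁻¹ * U ^ (ν + 3)) := h7
    _ = σ ^ 2 * (ν / (ν + 2)) * U ^ (ν + 3) := by
        field_simp

private lemma stl_key2 (σ ν t : ℝ) (hσ : 0 < σ) (hν : 0 < ν) :
    ((ν + 2) * (t ^ 2 / (σ ^ 2 * ν)) - 1) *
        (1 + t ^ 2 / (σ ^ 2 * ν)) ^ (-((ν + 5) / 2)) ≤
      2 * ((ν + 2) / (ν + 5)) ^ ((ν + 5) / 2) := by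
  have hA : (0:ℝ) < σ ^ 2 * ν := by positivity
  set U : ℝ := 1 + t ^ 2 / (σ ^ 2 * ν) with hUdef
  have hU0 : (0:ℝ) < U := by positivity
  have hP : (0:ℝ) < U ^ ((ν + 5) / 2) := Real.rpow_pos_of_pos hU0 _
  rw [Real.rpow_neg hU0.le, ← div_eq_mul_inv, div_le_iff₀ hP]
  have e5 : 2 * ((ν + 2) / (ν + 5)) ^ ((ν + 5) / 2) * U ^ ((ν + 5) / 2)
      = 2 * ((ν + 2) / (ν + 5) * U) ^ ((ν + 5) / 2) := by
    rw [Real.mul_rpow (by positivity) hU0.le, mul_assoc]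
  rw [e5]
  have hx : (0:ℝ) < (ν + 2) / (ν + 5) * U := by positivity
  have hs : (-1:ℝ) ≤ (ν + 2) / (ν + 5) * U - 1 := by linarith
  have h := one_add_mul_self_le_rpow_one_add hs (p := (ν + 5) / 2) (by linarith)
  rw [show 1 + ((ν + 2) / (ν + 5) * U - 1) = (ν + 2) / (ν + 5) * U by ring] at h
  have e4 : 2 * (1 + (ν + 5) / 2 * ((ν + 2) / (ν + 5) * U - 1))
      = (ν + 2) * (t ^ 2 / (σ ^ 2 * ν)) - 1 := by
    rw [hUdef]
    field_simp
    ring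
  linarith

/-- Bounds for the Student's t likelihood
`φ(f) = c·(1 + (y−f)²/(σ²ν))^{−(ν+1)/2}` with `c = Γ((ν+1)/2)/(Γ(ν/2)√(πν)σ)`:
`0 ≤ φ ≤ c`,
`|φ'| ≤ (c/σ)·((ν+1)/ν)·√(ν/(ν+2)) / ((ν+3)/(ν+2))^{(ν+3)/2}`, and
`−(c/σ²)·(ν+1)/ν ≤ φ'' ≤ 2(c/σ²)·((ν+1)/ν)·((ν+2)/(ν+5))^{(ν+5)/2}`. -/
theorem studentT_likelihood_derivative_bounds
    (y σ ν : ℝ) (hσ : 0 < σ) (hν : 0 < ν)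
    (c : ℝ)
    (hc : c = Real.Gamma ((ν + 1) / 2) /
        (Real.Gamma (ν / 2) * Real.sqrt (Real.pi * ν) * σ))
    (φ : ℝ → ℝ)
    (hφ : ∀ f : ℝ, φ f = c * (1 + (y - f) ^ 2 / (σ ^ 2 * ν)) ^ (-((ν + 1) / 2))) :
    ∀ f : ℝ,
      (0 ≤ φ f ∧ φ f ≤ c) ∧
      |deriv φ f| ≤
        (c / σ) * ((ν + 1) / ν) * Real.sqrt (ν / (ν + 2)) /
          ((ν + 3) / (ν + 2)) ^ ((ν + 3) / 2) ∧
      (-((c / σ ^ 2) * ((ν + 1) / ν)) ≤ deriv (deriv φ) f ∧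
        deriv (deriv φ) f ≤
          2 * (c / σ ^ 2) * ((ν + 1) / ν) * ((ν + 2) / (ν + 5)) ^ ((ν + 5) / 2)) := by
  have hA : (0:ℝ) < σ ^ 2 * ν := by positivity
  have hc0 : 0 < c := by
    rw [hc]
    have h1 : 0 < Real.Gamma ((ν + 1) / 2) := Real.Gamma_pos_of_pos (by linarith)
    have h2 : 0 < Real.Gamma (ν / 2) := Real.Gamma_pos_of_pos (by linarith)
    have h3 : 0 < Real.sqrt (Real.pi * ν) := Real.sqrt_pos.mpr (by positivity)
    positivity
  have hφ' : φ = fun f => c * (1 + (y - f) ^ 2 / (σ ^ 2 * ν)) ^ (-((ν + 1) / 2)) :=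
    funext hφ
  subst hφ'
  have hd1 : deriv (fun f => c * (1 + (y - f) ^ 2 / (σ ^ 2 * ν)) ^ (-((ν + 1) / 2)))
      = fun g => c * (ν + 1) / (σ ^ 2 * ν) *
          ((y - g) * (1 + (y - g) ^ 2 / (σ ^ 2 * ν)) ^ (-((ν + 3) / 2))) := by
    funext g
    rw [((stl_rpow_hasDerivAt y (σ ^ 2 * ν) (-((ν + 1) / 2)) g hA).const_mul c).deriv]
    rw [show -((ν + 1) / 2) - 1 = -((ν + 3) / 2) by ring]
    ring
  intro f
  have hU0 : (0:ℝ) < 1 + (y - f) ^ 2 / (σ ^ 2 * ν) := by positivity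
  have hU1 : (1:ℝ) ≤ 1 + (y - f) ^ 2 / (σ ^ 2 * ν) := by
    have : (0:ℝ) ≤ (y - f) ^ 2 / (σ ^ 2 * ν) := by positivity
    linarith
  have hK : (0:ℝ) < c * (ν + 1) / (σ ^ 2 * ν) := by positivity
  have hd2 : deriv (deriv (fun f => c * (1 + (y - f) ^ 2 / (σ ^ 2 * ν)) ^ (-((ν + 1) / 2)))) f
      = c * (ν + 1) / (σ ^ 2 * ν) *
          (((ν + 2) * ((y - f) ^ 2 / (σ ^ 2 * ν)) - 1) *
            (1 + (y - f) ^ 2 / (σ ^ 2 * ν)) ^ (-((ν + 5) / 2))) := by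
    rw [hd1]
    have h1 : HasDerivAt (fun g : ℝ => y - g) (-1) f := (hasDerivAt_id f).const_sub y
    have h2 := stl_rpow_hasDerivAt y (σ ^ 2 * ν) (-((ν + 3) / 2)) f hA
    have h3 := (h1.mul h2).const_mul (c * (ν + 1) / (σ ^ 2 * ν))
    have h3' : HasDerivAt (fun g => c * (ν + 1) / (σ ^ 2 * ν) * ((y - g) * (1 + (y - g) ^ 2 / (σ ^ 2 * ν)) ^ (-((ν + 3) / 2)))) _ f := h3
    rw [h3'.deriv]
    rw [show -((ν + 3) / 2) - 1 = -((ν + 5) / 2) by ring]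
    rw [show -((ν + 3) / 2) = 1 + -((ν + 5) / 2) by ring, Real.rpow_add hU0, Real.rpow_one]
    field_simp
    ring
  have hd1p : deriv (fun f => c * (1 + (y - f) ^ 2 / (σ ^ 2 * ν)) ^ (-((ν + 1) / 2))) f
      = c * (ν + 1) / (σ ^ 2 * ν) *
          ((y - f) * (1 + (y - f) ^ 2 / (σ ^ 2 * ν)) ^ (-((ν + 3) / 2))) := by
    rw [hd1]
  refine ⟨⟨?_, ?_⟩, ?_, ?_, ?_⟩
  · show (0:ℝ) ≤ c * (1 + (y - f) ^ 2 / (σ ^ 2 * ν)) ^ (-((ν + 1) / 2))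
    positivity
  · show c * (1 + (y - f) ^ 2 / (σ ^ 2 * ν)) ^ (-((ν + 1) / 2)) ≤ c
    exact mul_le_of_le_one_right hc0.le
      (Real.rpow_le_one_of_one_le_of_nonpos hU1 (by linarith))
  · rw [hd1p, abs_mul, abs_of_pos hK, abs_mul,
      abs_of_pos (Real.rpow_pos_of_pos hU0 (-((ν + 3) / 2)))]
    have key := stl_key1 σ ν (y - f) hσ hν
    calc c * (ν + 1) / (σ ^ 2 * ν) *
          (|y - f| * (1 + (y - f) ^ 2 / (σ ^ 2 * ν)) ^ (-((ν + 3) / 2)))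
        ≤ c * (ν + 1) / (σ ^ 2 * ν) *
            (σ * (Real.sqrt (ν / (ν + 2)) / ((ν + 3) / (ν + 2)) ^ ((ν + 3) / 2))) :=
          mul_le_mul_of_nonneg_left key hK.le
      _ = (c / σ) * ((ν + 1) / ν) * Real.sqrt (ν / (ν + 2)) /
            ((ν + 3) / (ν + 2)) ^ ((ν + 3) / 2) := by
          field_simp
  · rw [hd2]
    have hV1 : (1 + (y - f) ^ 2 / (σ ^ 2 * ν)) ^ (-((ν + 5) / 2)) ≤ 1 :=
      Real.rpow_le_one_of_one_le_of_nonpos hU1 (by linarith)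
    have hV0 : (0:ℝ) < (1 + (y - f) ^ 2 / (σ ^ 2 * ν)) ^ (-((ν + 5) / 2)) :=
      Real.rpow_pos_of_pos hU0 _
    have hw : (0:ℝ) ≤ (y - f) ^ 2 / (σ ^ 2 * ν) := by positivity
    have hcore : (-1:ℝ) ≤ ((ν + 2) * ((y - f) ^ 2 / (σ ^ 2 * ν)) - 1) *
        (1 + (y - f) ^ 2 / (σ ^ 2 * ν)) ^ (-((ν + 5) / 2)) := by
      rcases le_or_gt 0 ((ν + 2) * ((y - f) ^ 2 / (σ ^ 2 * ν)) - 1) with h | h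
      · nlinarith
      · have h8 := mul_le_mul_of_nonpos_left hV1 h.le
        nlinarith
    have h9 := mul_le_mul_of_nonneg_left hcore hK.le
    calc -((c / σ ^ 2) * ((ν + 1) / ν)) = c * (ν + 1) / (σ ^ 2 * ν) * (-1) := by
          field_simp
      _ ≤ _ := h9
  · rw [hd2]
    have key := stl_key2 σ ν (y - f) hσ hν
    calc c * (ν + 1) / (σ ^ 2 * ν) *
          (((ν + 2) * ((y - f) ^ 2 / (σ ^ 2 * ν)) - 1) *
            (1 + (y - f) ^ 2 / (σ ^ 2 * ν)) ^ (-((ν + 5) / 2)))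
        ≤ c * (ν + 1) / (σ ^ 2 * ν) * (2 * ((ν + 2) / (ν + 5)) ^ ((ν + 5) / 2)) :=
          mul_le_mul_of_nonneg_left key hK.le
      _ = 2 * (c / σ ^ 2) * ((ν + 1) / ν) * ((ν + 2) / (ν + 5)) ^ ((ν + 5) / 2) := by
          field_simp
end

section
/- Let μ ∈ ℝ, σ > 0, n > 1, and let q(f) = N(f; μ, σ²) and h₂(f) = N(f; μ, nσ²) be Gaussian densities. Let ℓ : ℝ → [0, ℓ_max] be a function, set r = σ√(log n / (1 − 1/n)), and suppose m₁ := sup over f ∈ [μ − r, μ + r] of ℓ(f) satisfies m₁ ≤ ℓ_max/√n. Then ℓ_max · h₂(f) ≥ q(f) · ℓ(f) for all f ∈ ℝ; i.e. h₂ with constant K = ℓ_max is a valid rejection-sampling envelope for the unnormalized product q(f)ℓ(f). -/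
/-- Validity of the broadened-Gaussian rejection-sampling envelope: if
`ℓ : ℝ → [0, ℓ_max]` and the supremum `m₁` of `ℓ` over the interval `[μ − r, μ + r]`
bounded by the intersection points of the Gaussian densities `q = N(μ, σ²)` and
`h₂ = N(μ, nσ²)` satisfies `m₁ ≤ ℓ_max/√n`, then `ℓ_max · h₂(f) ≥ q(f) · ℓ(f)` for
all `f`. -/
theorem rejection_sampling_envelope_valid
    (μ σ n : ℝ) (hσ : 0 < σ) (hn : 1 < n)
    (q h₂ : ℝ → ℝ)
    (hq : ∀ f : ℝ, q f =
      (1 / (σ * Real.sqrt (2 * Real.pi))) * Real.exp (-(f - μ) ^ 2 / (2 * σ ^ 2)))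
    (hh₂ : ∀ f : ℝ, h₂ f =
      (1 / (Real.sqrt (n * σ ^ 2) * Real.sqrt (2 * Real.pi))) *
        Real.exp (-(f - μ) ^ 2 / (2 * (n * σ ^ 2))))
    (r : ℝ) (hr : r = σ * Real.sqrt (Real.log n / (1 - 1 / n)))
    (ℓ : ℝ → ℝ) (ℓmax : ℝ)
    (hℓ : ∀ f : ℝ, ℓ f ∈ Set.Icc 0 ℓmax)
    (hm₁ : sSup (ℓ '' Set.Icc (μ - r) (μ + r)) ≤ ℓmax / Real.sqrt n) :
    ∀ f : ℝ, q f * ℓ f ≤ ℓmax * h₂ f := by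
  intro f
  have hn0 : (0:ℝ) < n := lt_trans one_pos hn
  have hπ : (0:ℝ) < Real.sqrt (2 * Real.pi) := Real.sqrt_pos.2 (by positivity)
  have hsqn : (0:ℝ) < Real.sqrt n := Real.sqrt_pos.2 hn0
  have hsn : Real.sqrt (n * σ ^ 2) = Real.sqrt n * σ := by
    rw [Real.sqrt_mul hn0.le, Real.sqrt_sq hσ.le]
  have hℓmax : 0 ≤ ℓmax := le_trans (hℓ f).1 (hℓ f).2
  have hlog : 0 < Real.log n := Real.log_pos hn
  have hone : 0 < 1 - 1 / n := by
    have h1 : 1 / n < 1 := by rw [div_lt_one hn0]; exact hn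
    linarith
  have hr2 : r ^ 2 = σ ^ 2 * (Real.log n / (1 - 1 / n)) := by
    rw [hr, mul_pow, Real.sq_sqrt (by positivity)]
  set t := (f - μ) ^ 2 with ht
  have ht0 : 0 ≤ t := sq_nonneg _
  have hq0 : 0 ≤ q f := by rw [hq]; positivity
  rw [hq, hh₂, hsn]
  by_cases hcase : t ≤ r ^ 2
  · -- inside the interval
    have hr0 : 0 ≤ r := by rw [hr]; positivity
    have habs : |f - μ| ≤ r := by
      have := Real.sqrt_le_sqrt hcase
      rwa [Real.sqrt_sq_eq_abs, Real.sqrt_sq hr0] at this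
    have hfmem : f ∈ Set.Icc (μ - r) (μ + r) := by
      rcases abs_le.1 habs with ⟨h1, h2⟩
      constructor <;> linarith
    have hbdd : BddAbove (ℓ '' Set.Icc (μ - r) (μ + r)) := by
      refine ⟨ℓmax, ?_⟩
      rintro _ ⟨x, _, rfl⟩
      exact (hℓ x).2
    have hℓf : ℓ f ≤ ℓmax / Real.sqrt n :=
      le_trans (le_csSup hbdd ⟨f, hfmem, rfl⟩) hm₁
    have hexp : Real.exp (-t / (2 * σ ^ 2)) ≤ Real.exp (-t / (2 * (n * σ ^ 2))) := by
      apply Real.exp_le_exp.2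
      rw [neg_div, neg_div, neg_le_neg_iff]
      exact div_le_div_of_nonneg_left ht0 (by positivity) (by nlinarith)
    have hqb : (1 / (σ * Real.sqrt (2 * Real.pi))) * Real.exp (-t / (2 * σ ^ 2)) ≤
        Real.sqrt n * ((1 / (Real.sqrt n * σ * Real.sqrt (2 * Real.pi))) *
          Real.exp (-t / (2 * (n * σ ^ 2)))) := by
      have heq : Real.sqrt n * ((1 / (Real.sqrt n * σ * Real.sqrt (2 * Real.pi))) *
          Real.exp (-t / (2 * (n * σ ^ 2)))) =
          (1 / (σ * Real.sqrt (2 * Real.pi))) * Real.exp (-t / (2 * (n * σ ^ 2))) := by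
        field_simp
      rw [heq]
      exact mul_le_mul_of_nonneg_left hexp (by positivity)
    calc (1 / (σ * Real.sqrt (2 * Real.pi))) * Real.exp (-t / (2 * σ ^ 2)) * ℓ f
        ≤ (Real.sqrt n * ((1 / (Real.sqrt n * σ * Real.sqrt (2 * Real.pi))) *
            Real.exp (-t / (2 * (n * σ ^ 2))))) * (ℓmax / Real.sqrt n) := by
          apply mul_le_mul hqb hℓf (hℓ f).1 (by positivity)
      _ = ℓmax * ((1 / (Real.sqrt n * σ * Real.sqrt (2 * Real.pi))) *
            Real.exp (-t / (2 * (n * σ ^ 2)))) := by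
          field_simp
  · -- outside the interval : q f ≤ h₂ f
    push_neg at hcase
    have hrr : r ^ 2 * (1 - 1 / n) = σ ^ 2 * Real.log n := by
      rw [hr2, mul_assoc, div_mul_cancel₀ _ hone.ne']
    have hkey : Real.log n / 2 ≤ t / (2 * σ ^ 2) - t / (2 * (n * σ ^ 2)) := by
      have heq : t / (2 * σ ^ 2) - t / (2 * (n * σ ^ 2)) = t * (n - 1) / (2 * n * σ ^ 2) := by
        field_simp
      rw [heq, div_le_div_iff₀ (by norm_num) (by positivity)]
      have hrr' : r ^ 2 * (n - 1) = n * (σ ^ 2 * Real.log n) := by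
        have h2 : r ^ 2 * ((1 - 1/n) * n) = σ ^ 2 * Real.log n * n := by
          rw [← mul_assoc, hrr]
        have h3 : (1 - 1/n) * n = n - 1 := by field_simp
        rw [h3] at h2; linarith
      nlinarith [mul_le_mul_of_nonneg_right hcase.le (by linarith : (0:ℝ) ≤ n - 1)]
    have hexp : Real.sqrt n * Real.exp (-t / (2 * σ ^ 2)) ≤
        Real.exp (-t / (2 * (n * σ ^ 2))) := by
      have hs : Real.sqrt n = Real.exp (Real.log n / 2) := by
        rw [← Real.log_sqrt hn0.le, Real.exp_log hsqn]
      rw [hs, ← Real.exp_add]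
      apply Real.exp_le_exp.2
      have : -t / (2 * σ ^ 2) = -(t / (2 * σ ^ 2)) := by ring
      rw [this]
      have : -t / (2 * (n * σ ^ 2)) = -(t / (2 * (n * σ ^ 2))) := by ring
      rw [this]
      linarith
    have hqh : (1 / (σ * Real.sqrt (2 * Real.pi))) * Real.exp (-t / (2 * σ ^ 2)) ≤
        (1 / (Real.sqrt n * σ * Real.sqrt (2 * Real.pi))) *
          Real.exp (-t / (2 * (n * σ ^ 2))) := by
      rw [div_mul_eq_mul_div, div_mul_eq_mul_div, div_le_div_iff₀ (by positivity) (by positivity)]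
      have := mul_le_mul_of_nonneg_right hexp (le_of_lt (by positivity : (0:ℝ) < σ * Real.sqrt (2 * Real.pi)))
      nlinarith [Real.exp_pos (-t / (2 * σ ^ 2)), Real.exp_pos (-t / (2 * (n * σ ^ 2)))]
    calc (1 / (σ * Real.sqrt (2 * Real.pi))) * Real.exp (-t / (2 * σ ^ 2)) * ℓ f
        ≤ ((1 / (Real.sqrt n * σ * Real.sqrt (2 * Real.pi))) *
            Real.exp (-t / (2 * (n * σ ^ 2)))) * ℓmax := by
          apply mul_le_mul hqh (hℓ f).2 (hℓ f).1 (by positivity)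
      _ = ℓmax * ((1 / (Real.sqrt n * σ * Real.sqrt (2 * Real.pi))) *
            Real.exp (-t / (2 * (n * σ ^ 2)))) := by ring
end

section
/- Let α ∈ (0,1), ζ > 0, and set ν = αζ. Let a, A, b, B be real numbers with A ≠ 0, B ≥ ζ, such that a and A have the same sign, (1−α)|A| ≤ |a| ≤ (1+α)|A|, b ≥ 0 and (1−α)B ≤ b ≤ (1+α)B. Then the smoothed ratio satisfies |a/(b+ν) − A/B| ≤ max{ (1+α)/(1−α) − 1, 1 − (1−α)/(1+2α) } · |A/B| ≤ (3α/(1−α)) · |A|/B. In particular, if additionally α ≤ 1/2, |A| ≤ B* and B ≥ ζ, then |a/(b+ν) − A/B| ≤ 6αB*/ζ. -/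
lemma smooth_aux_pos
    (α ζ a A b B : ℝ)
    (hα0 : 0 < α) (hα1 : α < 1) (hζ : 0 < ζ)
    (hApos : 0 < A) (hB : ζ ≤ B)
    (hapos : 0 < a)
    (ha_lb : (1 - α) * A ≤ a) (ha_ub : a ≤ (1 + α) * A)
    (hb_lb : (1 - α) * B ≤ b) (hb_ub : b ≤ (1 + α) * B) :
    |a / (b + α * ζ) - A / B| ≤
        max ((1 + α) / (1 - α) - 1) (1 - (1 - α) / (1 + 2 * α)) * (A / B) := by
  have hBpos : 0 < B := lt_of_lt_of_le hζ hB
  have h1α : 0 < 1 - α := by linarith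
  have hD : 0 < b + α * ζ := by nlinarith
  have hlb : (1 - α) * B ≤ b + α * ζ := by nlinarith
  have hub : b + α * ζ ≤ (1 + 2 * α) * B := by nlinarith
  have hRpos : 0 < A / B := div_pos hApos hBpos
  have hup : a / (b + α * ζ) ≤ ((1 + α) * A) / ((1 - α) * B) :=
    div_le_div₀ (by nlinarith) ha_ub (by positivity) hlb
  have hlo : ((1 - α) * A) / ((1 + 2 * α) * B) ≤ a / (b + α * ζ) :=
    div_le_div₀ (le_of_lt hapos) ha_lb hD hub
  have e1 : ((1 + α) * A) / ((1 - α) * B) = ((1 + α) / (1 - α)) * (A / B) := by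
    field_simp
  have e2 : ((1 - α) * A) / ((1 + 2 * α) * B) = ((1 - α) / (1 + 2 * α)) * (A / B) := by
    field_simp
  rw [abs_le]
  constructor
  · have := le_max_right ((1 + α) / (1 - α) - 1) (1 - (1 - α) / (1 + 2 * α))
    nlinarith [mul_le_mul_of_nonneg_right this (le_of_lt hRpos), hlo, e2.symm.le, e2.le]
  · have := le_max_left ((1 + α) / (1 - α) - 1) (1 - (1 - α) / (1 + 2 * α))
    nlinarith [mul_le_mul_of_nonneg_right this (le_of_lt hRpos), hup, e1.le]

/-- Deterministic perturbation bound for the smoothed ratio used by smooth-bMC: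
with smoothing constant `ν = αζ` added to the denominator, if `a` approximates `A ≠ 0`
within relative error `α` (with the same sign) and `b ≥ 0` approximates `B ≥ ζ` within
relative error `α`, then
`|a/(b+ν) − A/B| ≤ max{(1+α)/(1−α) − 1, 1 − (1−α)/(1+2α)}·|A/B| ≤ (3α/(1−α))·|A|/B`;
in particular if `α ≤ 1/2` and `|A| ≤ B*`, then `|a/(b+ν) − A/B| ≤ 6αB*/ζ`. -/
theorem smoothed_ratio_perturbation_bound
    (α ζ a A b B : ℝ)
    (hα0 : 0 < α) (hα1 : α < 1) (hζ : 0 < ζ)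
    (hA : A ≠ 0) (hB : ζ ≤ B)
    (hsign : 0 < a * A)
    (ha_lb : (1 - α) * |A| ≤ |a|) (ha_ub : |a| ≤ (1 + α) * |A|)
    (hb0 : 0 ≤ b)
    (hb_lb : (1 - α) * B ≤ b) (hb_ub : b ≤ (1 + α) * B) :
    |a / (b + α * ζ) - A / B| ≤
        max ((1 + α) / (1 - α) - 1) (1 - (1 - α) / (1 + 2 * α)) * |A / B| ∧
    max ((1 + α) / (1 - α) - 1) (1 - (1 - α) / (1 + 2 * α)) * |A / B| ≤
        (3 * α / (1 - α)) * (|A| / B) ∧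
    (∀ Bstar : ℝ, α ≤ 1 / 2 → |A| ≤ Bstar →
      |a / (b + α * ζ) - A / B| ≤ 6 * α * Bstar / ζ) := by
  have hBpos : 0 < B := lt_of_lt_of_le hζ hB
  have h1α : 0 < 1 - α := by linarith
  have habs : |A / B| = |A| / B := by
    rw [abs_div, abs_of_pos hBpos]
  have part1 : |a / (b + α * ζ) - A / B| ≤
      max ((1 + α) / (1 - α) - 1) (1 - (1 - α) / (1 + 2 * α)) * |A / B| := by
    rcases hA.lt_or_gt with hneg | hpos
    · have hapos : a < 0 := by nlinarith
      have h := smooth_aux_pos α ζ (-a) (-A) b B hα0 hα1 hζ (by linarith) hB (by linarith)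
        (by rw [abs_of_neg hneg] at ha_lb; rw [abs_of_neg hapos] at ha_lb; linarith)
        (by rw [abs_of_neg hneg] at ha_ub; rw [abs_of_neg hapos] at ha_ub; linarith)
        hb_lb hb_ub
      have e : |-a / (b + α * ζ) - -A / B| = |a / (b + α * ζ) - A / B| := by
        rw [neg_div, neg_div, ← neg_sub', abs_neg]
      rw [e] at h
      calc |a / (b + α * ζ) - A / B| ≤ _ * (-A / B) := h
        _ = _ * |A / B| := by rw [habs, abs_of_neg hneg]
    · have hapos : 0 < a := by nlinarith
      have h := smooth_aux_pos α ζ a A b B hα0 hα1 hζ hpos hB hapos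
        (by rwa [abs_of_pos hpos, abs_of_pos hapos] at ha_lb)
        (by rwa [abs_of_pos hpos, abs_of_pos hapos] at ha_ub)
        hb_lb hb_ub
      calc |a / (b + α * ζ) - A / B| ≤ _ * (A / B) := h
        _ = _ * |A / B| := by rw [habs, abs_of_pos hpos]
  have hM : max ((1 + α) / (1 - α) - 1) (1 - (1 - α) / (1 + 2 * α)) ≤ 3 * α / (1 - α) := by
    apply max_le
    · rw [sub_le_iff_le_add, div_add' _ _ _ (ne_of_gt h1α), div_le_div_iff₀ h1α h1α]
      nlinarith
    · have h2 : (0:ℝ) < 1 + 2 * α := by linarith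
      have e : 1 - (1 - α) / (1 + 2 * α) = 3 * α / (1 + 2 * α) := by
        field_simp; ring
      rw [e, div_le_div_iff₀ h2 h1α]
      nlinarith
  have part2 : max ((1 + α) / (1 - α) - 1) (1 - (1 - α) / (1 + 2 * α)) * |A / B| ≤
      (3 * α / (1 - α)) * (|A| / B) := by
    rw [habs]
    exact mul_le_mul_of_nonneg_right hM (by positivity)
  refine ⟨part1, part2, fun Bstar hhalf hAB => ?_⟩
  have h1 : (3 * α / (1 - α)) * (|A| / B) ≤ 6 * α * Bstar / ζ := by
    have h2 : 3 * α / (1 - α) ≤ 6 * α := by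
      rw [div_le_iff₀ h1α]; nlinarith
    have h3 : |A| / B ≤ Bstar / ζ := by
      apply div_le_div₀ (le_trans (abs_nonneg A) hAB) hAB hζ hB
    calc (3 * α / (1 - α)) * (|A| / B) ≤ (6 * α) * (Bstar / ζ) :=
          mul_le_mul h2 h3 (by positivity) (by positivity)
      _ = 6 * α * Bstar / ζ := by ring
  exact le_trans (le_trans part1 part2) h1
end
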